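/- For every integer d ≥ 1, every Schwartz function f ∈ 𝒮(ℝ^d; ℂ), every h > 0 and every ξ₀ ∈ ℝ^d \ {0}, the non-linear non-local integro-differential equation (d/dt) ξ^(h)(t) = 𝓕^(h)(ξ^(h))(t) with initial condition ξ^(h)(0) = ξ₀ admits a unique solution ξ^(h) in C¹([0,∞); ℝ^d). -/

import Mathlib

open MeasureTheory Filter Set
open scoped RealInnerProductSpace Topology ENNReal

noncomputable section

abbrev E (d : ℕ) := EuclideanSpace ℝ (Fin d)

/-- `g(η) = η |f(η)|²`. -/
def gfun {d : ℕ} (f : SchwartzMap (E d) ℂ) (η : E d) : E d := ‖f η‖ ^ 2 • η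

/-- the average `⨍_a^b u(σ) dσ`. -/
def intAvg {d : ℕ} (u : ℝ → E d) (a b : ℝ) : E d := (b - a)⁻¹ • ∫ σ in a..b, u σ

/-- `𝓕^(h)(u)(t)`; since `g` is real-valued, taking the real part of the complex
integral amounts to replacing `e^{-irθ}` by `cos (rθ)`. -/
def calF {d : ℕ} (f : SchwartzMap (E d) ℂ) (h : ℝ) (u : ℝ → E d) (t : ℝ) : E d :=
  (-2 : ℝ) • ∫ η, (∫ r in (0:ℝ)..(t / h),
    Real.cos (r * (‖η‖ ^ 2 - 2 * ⟪η, intAvg u (t - h * r) t⟫))) • gfun f η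

/-- A solution of the equation `ξ' = 𝓕^(h)(ξ)`, `ξ 0 = ξ₀`, of class `C¹` on `[0,∞)`. -/
def IsSolutionH {d : ℕ} (f : SchwartzMap (E d) ℂ) (h : ℝ) (ξ₀ : E d) (ξ : ℝ → E d) : Prop :=
  ξ 0 = ξ₀ ∧ (∀ t ∈ Set.Ici (0 : ℝ), HasDerivWithinAt ξ (calF f h ξ t) (Set.Ici (0 : ℝ)) t) ∧
    ContinuousOn (fun t => calF f h ξ t) (Set.Ici (0 : ℝ))

/-! ### Auxiliary material -/

variable {d : ℕ} {h : ℝ} {u v : ℝ → E d}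

lemma abs_cos_sub_cos_le (a b : ℝ) : |Real.cos a - Real.cos b| ≤ |a - b| := by
  rw [Real.cos_sub_cos, abs_mul, abs_mul]
  have h1 : |Real.sin ((a+b)/2)| ≤ 1 := Real.abs_sin_le_one _
  have h2 : |Real.sin ((a-b)/2)| ≤ |(a-b)/2| := Real.abs_sin_le_abs
  have h3 : |(-2 : ℝ)| = 2 := by norm_num
  rw [h3]
  calc 2 * |Real.sin ((a+b)/2)| * |Real.sin ((a-b)/2)| ≤ 2 * 1 * |(a-b)/2| := by
        apply mul_le_mul _ h2 (abs_nonneg _) (by positivity)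
        exact mul_le_mul_of_nonneg_left h1 (by norm_num)
    _ = 2 * (|a-b|/2) := by rw [abs_div]; norm_num
    _ = |a - b| := by ring

lemma norm_gfun (f : SchwartzMap (E d) ℂ) (η : E d) : ‖gfun f η‖ = ‖f η‖ ^ 2 * ‖η‖ := by
  rw [gfun, norm_smul]
  congr 1
  exact abs_of_nonneg (by positivity)

lemma continuous_gfun (f : SchwartzMap (E d) ℂ) : Continuous (gfun f) :=
  ((f.continuous.norm.pow 2)).smul continuous_id

lemma integrable_pow_mul_sq (f : SchwartzMap (E d) ℂ) (k : ℕ) :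
    Integrable (fun η : E d => ‖η‖ ^ k * ‖f η‖ ^ 2) := by
  have hB : ∀ x : E d, ‖f x‖ ≤ SchwartzMap.seminorm ℝ 0 0 f := fun x =>
    SchwartzMap.norm_le_seminorm ℝ f x
  refine Integrable.mono' (((f.integrable_pow_mul volume k).const_mul
    (SchwartzMap.seminorm ℝ 0 0 f))) ?_ ?_
  · exact ((continuous_norm.pow k).mul (f.continuous.norm.pow 2)).aestronglyMeasurable
  · refine Eventually.of_forall fun x => ?_
    have h0 : ‖f x‖ ^ 2 ≤ (SchwartzMap.seminorm ℝ 0 0 f) * ‖f x‖ := by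
      rw [sq]
      exact mul_le_mul_of_nonneg_right (hB x) (norm_nonneg _)
    rw [Real.norm_eq_abs, abs_of_nonneg (by positivity)]
    calc ‖x‖ ^ k * ‖f x‖ ^ 2 ≤ ‖x‖ ^ k * ((SchwartzMap.seminorm ℝ 0 0 f) * ‖f x‖) :=
          mul_le_mul_of_nonneg_left h0 (by positivity)
      _ = (SchwartzMap.seminorm ℝ 0 0 f) * (‖x‖ ^ k * ‖f x‖) := by ring

/-- the moments of `|f|²`. -/
def Cf (f : SchwartzMap (E d) ℂ) (k : ℕ) : ℝ := ∫ η : E d, ‖η‖ ^ k * ‖f η‖ ^ 2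

lemma Cf_nonneg (f : SchwartzMap (E d) ℂ) (k : ℕ) : 0 ≤ Cf f k :=
  integral_nonneg fun η => by positivity

/-- the (regularized) phase inside the cosine -/
def inn {d : ℕ} (h : ℝ) (u : ℝ → E d) (t : ℝ) (η : E d) : ℝ :=
  ∫ r in (0:ℝ)..(t / h),
    Real.cos (r * ‖η‖ ^ 2 - 2 * h⁻¹ * ⟪η, ∫ σ in (t - h * r)..t, u σ⟫)

/-- a regularized version of `calF` avoiding the junk value of `intAvg` at `r = 0`. -/
def calF2 {d : ℕ} (f : SchwartzMap (E d) ℂ) (h : ℝ) (u : ℝ → E d) (t : ℝ) : E d :=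
  (-2 : ℝ) • ∫ η, inn h u t η • gfun f η

lemma calF_eq (f : SchwartzMap (E d) ℂ) (hh : 0 < h) (u : ℝ → E d) (t : ℝ) :
    calF f h u t = calF2 f h u t := by
  unfold calF calF2 inn
  congr 1
  apply integral_congr_ae
  refine Eventually.of_forall fun η => ?_
  simp only []
  congr 1
  apply intervalIntegral.integral_congr
  intro r _
  simp only []
  rcases eq_or_ne r 0 with rfl | hr
  · simp [intAvg]
  · have hI : intAvg u (t - h * r) t = (h * r)⁻¹ • ∫ σ in (t - h * r)..t, u σ := by
      rw [intAvg]; congr 2; ring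
    rw [hI, real_inner_smul_right]
    congr 1
    field_simp

lemma continuous_inn_pair (h : ℝ) (hu : Continuous u) :
    Continuous fun p : ℝ × E d => inn h u p.1 p.2 := by
  have hP : Continuous fun x => ∫ σ in (0:ℝ)..x, u σ :=
    intervalIntegral.continuous_primitive (fun a b => hu.intervalIntegrable a b) 0
  have key : ∀ a b : ℝ, (∫ σ in a..b, u σ)
      = (∫ σ in (0:ℝ)..b, u σ) - ∫ σ in (0:ℝ)..a, u σ := fun a b =>
    (intervalIntegral.integral_interval_sub_left (hu.intervalIntegrable _ _)
      (hu.intervalIntegrable _ _)).symm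
  have hcont : Continuous (Function.uncurry fun (p : ℝ × E d) (r : ℝ) =>
      Real.cos (r * ‖p.2‖ ^ 2 - 2 * h⁻¹ * ⟪p.2, ∫ σ in (p.1 - h * r)..p.1, u σ⟫)) := by
    apply Real.continuous_cos.comp
    apply Continuous.sub
    · fun_prop
    · apply Continuous.mul continuous_const
      apply Continuous.inner (by fun_prop : Continuous fun q : (ℝ × E d) × ℝ => q.1.2)
      have : (fun q : (ℝ × E d) × ℝ => ∫ σ in (q.1.1 - h * q.2)..q.1.1, u σ)
          = fun q : (ℝ × E d) × ℝ =>
            (∫ σ in (0:ℝ)..q.1.1, u σ) - ∫ σ in (0:ℝ)..(q.1.1 - h * q.2), u σ := by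
        funext q; exact key _ _
      rw [this]
      exact (hP.comp (by fun_prop)).sub (hP.comp (by fun_prop))
  exact intervalIntegral.continuous_parametric_intervalIntegral_of_continuous
    (μ := volume) hcont (continuous_fst.div_const h)

lemma continuous_inn (h : ℝ) (hu : Continuous u) (t : ℝ) :
    Continuous fun η : E d => inn h u t η := by
  have h2 : Continuous fun η : E d => ((t, η) : ℝ × E d) :=
    continuous_const.prodMk continuous_id
  have h3 := Continuous.comp (continuous_inn_pair h hu) h2
  exact h3

lemma abs_inn_le (hh : 0 < h) (t : ℝ) (η : E d) : |inn h u t η| ≤ |t| / h := by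
  have := intervalIntegral.norm_integral_le_of_norm_le_const (a := (0:ℝ)) (b := t / h)
    (C := 1) (f := fun r => Real.cos (r * ‖η‖ ^ 2 - 2 * h⁻¹ * ⟪η, ∫ σ in (t - h * r)..t, u σ⟫))
    (fun x _ => by simpa using Real.abs_cos_le_one _)
  rw [Real.norm_eq_abs] at this
  calc |inn h u t η| ≤ 1 * |t / h - 0| := this
    _ = |t| / h := by rw [sub_zero, one_mul, abs_div, abs_of_pos hh]

lemma integrable_inn_smul (f : SchwartzMap (E d) ℂ) (hh : 0 < h) (hu : Continuous u) (t : ℝ) :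
    Integrable (fun η : E d => inn h u t η • gfun f η) := by
  refine Integrable.mono' ((integrable_pow_mul_sq f 1).const_mul (|t| / h)) ?_
    (Eventually.of_forall fun η => ?_)
  · exact ((continuous_inn h hu t).smul (continuous_gfun f)).aestronglyMeasurable
  · rw [norm_smul, Real.norm_eq_abs, norm_gfun]
    calc |inn h u t η| * (‖f η‖^2 * ‖η‖) ≤ (|t|/h) * (‖f η‖^2 * ‖η‖) :=
          mul_le_mul_of_nonneg_right (abs_inn_le hh t η) (by positivity)
      _ = |t|/h * (‖η‖^1 * ‖f η‖^2) := by ring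

lemma continuous_calF2 (f : SchwartzMap (E d) ℂ) (hh : 0 < h) (hu : Continuous u) :
    Continuous (calF2 f h u) := by
  rw [continuous_iff_continuousAt]
  intro t₀
  unfold calF2
  have hI : ContinuousAt (fun t => ∫ η, inn h u t η • gfun f η) t₀ := by
    apply continuousAt_of_dominated (bound := fun η => ((|t₀|+1)/h) * (‖η‖^1 * ‖f η‖^2))
    · exact Eventually.of_forall fun t =>
        ((continuous_inn h hu t).smul (continuous_gfun f)).aestronglyMeasurable
    · filter_upwards [Metric.ball_mem_nhds t₀ one_pos] with t ht
      refine Eventually.of_forall fun η => ?_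
      rw [norm_smul, Real.norm_eq_abs, norm_gfun]
      have h1 : |t| ≤ |t₀| + 1 := by
        rw [Metric.mem_ball, Real.dist_eq] at ht
        calc |t| = |(t - t₀) + t₀| := by ring_nf
          _ ≤ |t - t₀| + |t₀| := abs_add_le _ _
          _ ≤ |t₀| + 1 := by linarith
      calc |inn h u t η| * (‖f η‖^2*‖η‖) ≤ (|t|/h) * (‖f η‖^2*‖η‖) :=
            mul_le_mul_of_nonneg_right (abs_inn_le hh t η) (by positivity)
        _ ≤ ((|t₀|+1)/h) * (‖f η‖^2*‖η‖) := by
            apply mul_le_mul_of_nonneg_right _ (by positivity)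
            exact div_le_div_of_nonneg_right h1 hh.le
        _ = ((|t₀|+1)/h) * (‖η‖^1*‖f η‖^2) := by ring
    · exact (integrable_pow_mul_sq f 1).const_mul _
    · refine Eventually.of_forall fun η => ?_
      have h2 : Continuous fun t : ℝ => ((t, η) : ℝ × E d) :=
        continuous_id.prodMk continuous_const
      have h3 := Continuous.comp (continuous_inn_pair h hu) h2
      exact (h3.continuousAt).smul continuousAt_const
  exact (continuousAt_const : ContinuousAt (fun _ : ℝ => (-2:ℝ)) t₀).smul hI

lemma continuous_cos_r (h : ℝ) (hu : Continuous u) (t : ℝ) (η : E d) :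
    Continuous fun r : ℝ =>
      Real.cos (r * ‖η‖ ^ 2 - 2 * h⁻¹ * ⟪η, ∫ σ in (t - h * r)..t, u σ⟫) := by
  have h2 : Continuous fun r : ℝ => (((t, η) : ℝ × E d), r) :=
    continuous_const.prodMk continuous_id
  have hcont : Continuous (Function.uncurry fun (p : ℝ × E d) (r : ℝ) =>
      Real.cos (r * ‖p.2‖ ^ 2 - 2 * h⁻¹ * ⟪p.2, ∫ σ in (p.1 - h * r)..p.1, u σ⟫)) := by
    have hP : Continuous fun x => ∫ σ in (0:ℝ)..x, u σ :=
      intervalIntegral.continuous_primitive (fun a b => hu.intervalIntegrable a b) 0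
    have key : ∀ a b : ℝ, (∫ σ in a..b, u σ)
        = (∫ σ in (0:ℝ)..b, u σ) - ∫ σ in (0:ℝ)..a, u σ := fun a b =>
      (intervalIntegral.integral_interval_sub_left (hu.intervalIntegrable _ _)
        (hu.intervalIntegrable _ _)).symm
    apply Real.continuous_cos.comp
    apply Continuous.sub
    · fun_prop
    · apply Continuous.mul continuous_const
      apply Continuous.inner (by fun_prop : Continuous fun q : (ℝ × E d) × ℝ => q.1.2)
      have : (fun q : (ℝ × E d) × ℝ => ∫ σ in (q.1.1 - h * q.2)..q.1.1, u σ)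
          = fun q : (ℝ × E d) × ℝ =>
            (∫ σ in (0:ℝ)..q.1.1, u σ) - ∫ σ in (0:ℝ)..(q.1.1 - h * q.2), u σ := by
        funext q; exact key _ _
      rw [this]
      exact (hP.comp (by fun_prop)).sub (hP.comp (by fun_prop))
  have h3 := Continuous.comp hcont h2
  exact h3

lemma inn_sub_le (hh : 0 < h) (hu : Continuous u) (hv : Continuous v) {t : ℝ} (ht : 0 ≤ t)
    {M : ℝ} (hM : 0 ≤ M) (hb : ∀ s ∈ Icc (0:ℝ) t, ‖u s - v s‖ ≤ M) (η : E d) :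
    |inn h u t η - inn h v t η| ≤ M * (t / h) ^ 2 * ‖η‖ := by
  have hth : 0 ≤ t / h := div_nonneg ht hh.le
  unfold inn
  rw [← intervalIntegral.integral_sub ((continuous_cos_r h hu t η).intervalIntegrable _ _)
    ((continuous_cos_r h hv t η).intervalIntegrable _ _)]
  have hbd : ∀ r ∈ Set.uIoc (0:ℝ) (t / h),
      ‖Real.cos (r * ‖η‖ ^ 2 - 2 * h⁻¹ * ⟪η, ∫ σ in (t - h * r)..t, u σ⟫)
        - Real.cos (r * ‖η‖ ^ 2 - 2 * h⁻¹ * ⟪η, ∫ σ in (t - h * r)..t, v σ⟫)‖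
      ≤ 2 * M * ‖η‖ * r := by
    intro r hr
    rw [uIoc_of_le hth] at hr
    have hr0 : 0 < r := hr.1
    have hrt : h * r ≤ t := by
      have := hr.2
      rw [le_div_iff₀ hh] at this
      linarith
    have hsub : (∫ σ in (t - h * r)..t, u σ) - (∫ σ in (t - h * r)..t, v σ)
        = ∫ σ in (t - h * r)..t, (u σ - v σ) :=
      (intervalIntegral.integral_sub (hu.intervalIntegrable _ _)
        (hv.intervalIntegrable _ _)).symm
    have hIbound : ‖∫ σ in (t - h * r)..t, (u σ - v σ)‖ ≤ M * (h * r) := by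
      have := intervalIntegral.norm_integral_le_of_norm_le_const (a := t - h * r) (b := t)
        (C := M) (f := fun σ => u σ - v σ) ?_
      · calc ‖∫ σ in (t - h * r)..t, (u σ - v σ)‖ ≤ M * |t - (t - h * r)| := this
          _ = M * (h * r) := by
            congr 1
            rw [show t - (t - h * r) = h * r by ring, abs_of_nonneg (by positivity)]
      · intro σ hσ
        have h1 : t - h * r ≤ t := by nlinarith
        rw [uIoc_of_le h1] at hσ
        exact hb σ ⟨by nlinarith [hσ.1], hσ.2⟩
    rw [Real.norm_eq_abs]
    calc |Real.cos _ - Real.cos _| ≤ |(r * ‖η‖ ^ 2 - 2 * h⁻¹ * ⟪η, ∫ σ in (t - h * r)..t, u σ⟫)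
          - (r * ‖η‖ ^ 2 - 2 * h⁻¹ * ⟪η, ∫ σ in (t - h * r)..t, v σ⟫)| := abs_cos_sub_cos_le _ _
      _ = 2 * h⁻¹ * |⟪η, (∫ σ in (t - h * r)..t, v σ) - (∫ σ in (t - h * r)..t, u σ)⟫| := by
          rw [show (r * ‖η‖ ^ 2 - 2 * h⁻¹ * ⟪η, ∫ σ in (t - h * r)..t, u σ⟫)
            - (r * ‖η‖ ^ 2 - 2 * h⁻¹ * ⟪η, ∫ σ in (t - h * r)..t, v σ⟫)
            = 2 * h⁻¹ * (⟪η, ∫ σ in (t - h * r)..t, v σ⟫ - ⟪η, ∫ σ in (t - h * r)..t, u σ⟫) by ring,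
            ← inner_sub_right, abs_mul]
          congr 1
          rw [abs_of_nonneg (by positivity)]
      _ ≤ 2 * h⁻¹ * (‖η‖ * ‖(∫ σ in (t - h * r)..t, v σ) - (∫ σ in (t - h * r)..t, u σ)‖) := by
          apply mul_le_mul_of_nonneg_left _ (by positivity)
          exact abs_real_inner_le_norm _ _
      _ ≤ 2 * h⁻¹ * (‖η‖ * (M * (h * r))) := by
          apply mul_le_mul_of_nonneg_left _ (by positivity)
          apply mul_le_mul_of_nonneg_left _ (norm_nonneg _)
          rw [norm_sub_rev, hsub]
          exact hIbound
      _ = 2 * M * ‖η‖ * r := by field_simp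
  have hInt : IntervalIntegrable (fun r : ℝ => 2 * M * ‖η‖ * r) volume 0 (t / h) :=
    (continuous_const.mul continuous_id).intervalIntegrable _ _
  have h3 : (∫ r in (0:ℝ)..(t/h), 2*M*‖η‖*r) = M * (t/h)^2 * ‖η‖ := by
    rw [intervalIntegral.integral_const_mul, integral_id]
    ring
  rw [← Real.norm_eq_abs]
  calc ‖∫ r in (0:ℝ)..(t/h), (Real.cos (r * ‖η‖ ^ 2 - 2 * h⁻¹ * ⟪η, ∫ σ in (t - h * r)..t, u σ⟫)
        - Real.cos (r * ‖η‖ ^ 2 - 2 * h⁻¹ * ⟪η, ∫ σ in (t - h * r)..t, v σ⟫))‖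
      ≤ |∫ r in (0:ℝ)..(t/h), 2*M*‖η‖*r| :=
        intervalIntegral.norm_integral_le_abs_of_norm_le
          ((ae_restrict_mem measurableSet_uIoc).mono fun r hr => hbd r hr) hInt
    _ = |M * (t/h)^2 * ‖η‖| := by rw [h3]
    _ = M * (t/h)^2 * ‖η‖ := abs_of_nonneg (by positivity)

lemma calF2_lip (f : SchwartzMap (E d) ℂ) (hh : 0 < h) (hu : Continuous u)
    (hv : Continuous v) {t : ℝ} (ht : 0 ≤ t) {M : ℝ} (hM : 0 ≤ M)
    (hb : ∀ s ∈ Icc (0:ℝ) t, ‖u s - v s‖ ≤ M) :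
    ‖calF2 f h u t - calF2 f h v t‖ ≤ 2 * Cf f 2 * (t / h) ^ 2 * M := by
  unfold calF2
  rw [← smul_sub,
    ← integral_sub (integrable_inn_smul f hh hu t) (integrable_inn_smul f hh hv t)]
  have heq : (fun η : E d => inn h u t η • gfun f η - inn h v t η • gfun f η)
      = fun η : E d => (inn h u t η - inn h v t η) • gfun f η := by
    funext η; rw [sub_smul]
  rw [heq, norm_smul]
  have hnorm2 : ‖(-2:ℝ)‖ = 2 := by norm_num
  rw [hnorm2]
  have hb2 : ‖∫ η : E d, (inn h u t η - inn h v t η) • gfun f η‖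
      ≤ ∫ η : E d, (M * (t/h)^2) * (‖η‖^2 * ‖f η‖^2) := by
    apply norm_integral_le_of_norm_le
    · exact (integrable_pow_mul_sq f 2).const_mul _
    · refine Eventually.of_forall fun η => ?_
      rw [norm_smul, Real.norm_eq_abs, norm_gfun]
      calc |inn h u t η - inn h v t η| * (‖f η‖^2 * ‖η‖)
          ≤ (M * (t/h)^2 * ‖η‖) * (‖f η‖^2 * ‖η‖) :=
            mul_le_mul_of_nonneg_right (inn_sub_le hh hu hv ht hM hb η) (by positivity)
        _ = (M * (t/h)^2) * (‖η‖^2 * ‖f η‖^2) := by ring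
  calc 2 * ‖∫ η : E d, (inn h u t η - inn h v t η) • gfun f η‖
      ≤ 2 * ∫ η : E d, (M * (t/h)^2) * (‖η‖^2 * ‖f η‖^2) := by linarith
    _ = 2 * ((M * (t/h)^2) * Cf f 2) := by rw [integral_const_mul]; rfl
    _ = 2 * Cf f 2 * (t/h)^2 * M := by ring

lemma calF2_congr (f : SchwartzMap (E d) ℂ) (hh : 0 < h) {t : ℝ} (ht : 0 ≤ t)
    (huv : EqOn u v (Icc (0:ℝ) t)) : calF2 f h u t = calF2 f h v t := by
  have hth : 0 ≤ t / h := div_nonneg ht hh.le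
  unfold calF2
  congr 1
  apply integral_congr_ae
  refine Eventually.of_forall fun η => ?_
  simp only []
  congr 1
  unfold inn
  apply intervalIntegral.integral_congr
  intro r hr
  rw [uIcc_of_le hth] at hr
  have hr0 : 0 ≤ r := hr.1
  have hrt : h * r ≤ t := by
    have := hr.2
    rw [le_div_iff₀ hh] at this
    linarith
  simp only []
  have hIc : (∫ σ in (t - h*r)..t, u σ) = ∫ σ in (t - h*r)..t, v σ := by
    apply intervalIntegral.integral_congr
    intro σ hσ
    have h1 : t - h * r ≤ t := by nlinarith
    rw [uIcc_of_le h1] at hσ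
    exact huv ⟨by nlinarith [hσ.1], hσ.2⟩
  rw [hIc]

/-! ### The Picard operator on `C(Icc 0 T, E d)` -/

/-- extension of a map on `Icc 0 T` to `ℝ` by projection. -/
def extIcc {d : ℕ} (T : ℝ) (hT : 0 ≤ T) (w : C(Icc (0:ℝ) T, E d)) : ℝ → E d :=
  fun s => w (projIcc 0 T hT s)

lemma continuous_extIcc (T : ℝ) (hT : 0 ≤ T) (w : C(Icc (0:ℝ) T, E d)) :
    Continuous (extIcc T hT w) := w.continuous.comp (continuous_projIcc)

lemma extIcc_eq (T : ℝ) (hT : 0 ≤ T) (w : C(Icc (0:ℝ) T, E d)) {s : ℝ} (hs : s ∈ Icc (0:ℝ) T) :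
    extIcc T hT w s = w ⟨s, hs⟩ := by rw [extIcc, projIcc_of_mem]

/-- the Picard operator for the integral equation. -/
def Kop (f : SchwartzMap (E d) ℂ) (h : ℝ) (hh : 0 < h) (ξ₀ : E d) (T : ℝ) (hT : 0 ≤ T)
    (w : C(Icc (0:ℝ) T, E d)) : C(Icc (0:ℝ) T, E d) :=
  ⟨fun s => ξ₀ + ∫ τ in (0:ℝ)..(s:ℝ), calF2 f h (extIcc T hT w) τ, by
    apply Continuous.add continuous_const
    have hP : Continuous fun x : ℝ => ∫ τ in (0:ℝ)..x, calF2 f h (extIcc T hT w) τ :=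
      intervalIntegral.continuous_primitive
        (fun a b => (continuous_calF2 f hh (continuous_extIcc T hT w)).intervalIntegrable a b) 0
    exact hP.comp continuous_subtype_val⟩

lemma Kop_apply (f : SchwartzMap (E d) ℂ) (h : ℝ) (hh : 0 < h) (ξ₀ : E d) (T : ℝ) (hT : 0 ≤ T)
    (w : C(Icc (0:ℝ) T, E d)) (s : Icc (0:ℝ) T) :
    Kop f h hh ξ₀ T hT w s = ξ₀ + ∫ τ in (0:ℝ)..(s:ℝ), calF2 f h (extIcc T hT w) τ := rfl

lemma Kop_iter_bound (f : SchwartzMap (E d) ℂ) (hh : 0 < h) (ξ₀ : E d) {T : ℝ} (hT : 0 ≤ T)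
    (w₁ w₂ : C(Icc (0:ℝ) T, E d)) : ∀ n : ℕ, ∀ s : Icc (0:ℝ) T,
    ‖((Kop f h hh ξ₀ T hT)^[n] w₁) s - ((Kop f h hh ξ₀ T hT)^[n] w₂) s‖
      ≤ (2 * Cf f 2 * (T/h)^2)^n * (s:ℝ)^n / (n.factorial : ℝ) * dist w₁ w₂ := by
  set L := 2 * Cf f 2 * (T/h)^2 with hL
  have hL0 : 0 ≤ L := by
    have := Cf_nonneg f 2
    positivity
  intro n
  induction n with
  | zero =>
    intro s
    simp only [Function.iterate_zero, id_eq, pow_zero, Nat.factorial_zero, Nat.cast_one,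
      one_mul, mul_one, div_one]
    rw [← dist_eq_norm]
    exact ContinuousMap.dist_apply_le_dist s
  | succ n ih =>
    intro s
    have hs0 : (0:ℝ) ≤ (s:ℝ) := s.2.1
    have hsT : (s:ℝ) ≤ T := s.2.2
    rw [Function.iterate_succ_apply', Function.iterate_succ_apply']
    set a := (Kop f h hh ξ₀ T hT)^[n] w₁ with ha
    set b := (Kop f h hh ξ₀ T hT)^[n] w₂ with hbdef
    have hconta := continuous_extIcc T hT a
    have hcontb := continuous_extIcc T hT b
    rw [Kop_apply, Kop_apply, add_sub_add_left_eq_sub,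
      ← intervalIntegral.integral_sub
        ((continuous_calF2 f hh hconta).intervalIntegrable _ _)
        ((continuous_calF2 f hh hcontb).intervalIntegrable _ _)]
    have hbd : ∀ τ ∈ Set.uIoc (0:ℝ) (s:ℝ),
        ‖calF2 f h (extIcc T hT a) τ - calF2 f h (extIcc T hT b) τ‖
          ≤ (L^(n+1) / (n.factorial : ℝ) * dist w₁ w₂) * τ^n := by
      intro τ hτ
      rw [uIoc_of_le hs0] at hτ
      have hτ0 : 0 ≤ τ := hτ.1.le
      have hτT : τ ≤ T := hτ.2.trans hsT
      have hM0 : 0 ≤ L^n * τ^n / (n.factorial : ℝ) * dist w₁ w₂ := by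
        have := dist_nonneg (x := w₁) (y := w₂)
        positivity
      have hlip := calF2_lip f hh hconta hcontb hτ0 hM0 (fun σ hσ => ?_)
      · calc ‖calF2 f h (extIcc T hT a) τ - calF2 f h (extIcc T hT b) τ‖
            ≤ 2 * Cf f 2 * (τ/h)^2 * (L^n * τ^n / (n.factorial : ℝ) * dist w₁ w₂) := hlip
          _ ≤ L * (L^n * τ^n / (n.factorial : ℝ) * dist w₁ w₂) := by
              apply mul_le_mul_of_nonneg_right _ hM0
              rw [hL]
              apply mul_le_mul_of_nonneg_left _ (by have := Cf_nonneg f 2; positivity)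
              apply pow_le_pow_left₀ (by positivity)
              exact div_le_div_of_nonneg_right hτT hh.le
          _ = (L^(n+1) / (n.factorial : ℝ) * dist w₁ w₂) * τ^n := by ring
      · -- the sup bound on [0, τ]
        have hσT : σ ∈ Icc (0:ℝ) T := ⟨hσ.1, hσ.2.trans hτT⟩
        rw [extIcc_eq T hT a hσT, extIcc_eq T hT b hσT]
        calc ‖a ⟨σ, hσT⟩ - b ⟨σ, hσT⟩‖ ≤ L^n * σ^n / (n.factorial : ℝ) * dist w₁ w₂ :=
              ih ⟨σ, hσT⟩
          _ ≤ L^n * τ^n / (n.factorial : ℝ) * dist w₁ w₂ := by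
              apply mul_le_mul_of_nonneg_right _ dist_nonneg
              apply div_le_div_of_nonneg_right _ (Nat.cast_nonneg _)
              exact mul_le_mul_of_nonneg_left (pow_le_pow_left₀ hσ.1 hσ.2 n) (pow_nonneg hL0 n)
    have hInt : IntervalIntegrable
        (fun τ : ℝ => (L^(n+1) / (n.factorial : ℝ) * dist w₁ w₂) * τ^n) volume 0 (s:ℝ) :=
      (continuous_const.mul (continuous_pow n)).intervalIntegrable _ _
    have hfac : (0:ℝ) < (n.factorial : ℝ) := by exact_mod_cast n.factorial_pos
    have hval : (∫ τ in (0:ℝ)..(s:ℝ), (L^(n+1) / (n.factorial : ℝ) * dist w₁ w₂) * τ^n)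
        = L^(n+1) * (s:ℝ)^(n+1) / ((n+1).factorial : ℝ) * dist w₁ w₂ := by
      rw [intervalIntegral.integral_const_mul, integral_pow]
      push_cast [Nat.factorial_succ]
      field_simp
      ring
    calc ‖∫ τ in (0:ℝ)..(s:ℝ),
          (calF2 f h (extIcc T hT a) τ - calF2 f h (extIcc T hT b) τ)‖
        ≤ |∫ τ in (0:ℝ)..(s:ℝ), (L^(n+1) / (n.factorial : ℝ) * dist w₁ w₂) * τ^n| :=
          intervalIntegral.norm_integral_le_abs_of_norm_le
            ((ae_restrict_mem measurableSet_uIoc).mono fun τ hτ => hbd τ hτ) hInt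
      _ = |L^(n+1) * (s:ℝ)^(n+1) / ((n+1).factorial : ℝ) * dist w₁ w₂| := by rw [hval]
      _ = L^(n+1) * (s:ℝ)^(n+1) / ((n+1).factorial : ℝ) * dist w₁ w₂ := by
          apply abs_of_nonneg
          have hD : 0 ≤ dist w₁ w₂ := dist_nonneg
          positivity

lemma Kop_exists_unique (f : SchwartzMap (E d) ℂ) (hh : 0 < h) (ξ₀ : E d) {T : ℝ} (hT : 0 ≤ T) :
    ∃! w : C(Icc (0:ℝ) T, E d), Kop f h hh ξ₀ T hT w = w := by
  set L := 2 * Cf f 2 * (T/h)^2 with hL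
  have hL0 : 0 ≤ L := by
    have := Cf_nonneg f 2
    positivity
  obtain ⟨n, hn⟩ : ∃ n : ℕ, (L * T)^n / (n.factorial : ℝ) < 1 := by
    have htend := FloorSemiring.tendsto_pow_div_factorial_atTop (K := ℝ) (L * T)
    exact (htend.eventually (gt_mem_nhds one_pos)).exists
  have hc0 : 0 ≤ (L * T)^n / (n.factorial : ℝ) := by positivity
  set K : NNReal := ((L * T)^n / (n.factorial : ℝ)).toNNReal with hK
  have hKcoe : (K : ℝ) = (L * T)^n / (n.factorial : ℝ) := Real.coe_toNNReal _ hc0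
  haveI : Nonempty (C(Icc (0:ℝ) T, E d)) := ⟨ContinuousMap.const _ 0⟩
  have hcontr : ContractingWith K ((Kop f h hh ξ₀ T hT)^[n]) := by
    constructor
    · rw [← NNReal.coe_lt_one, hKcoe]
      exact hn
    · apply LipschitzWith.of_dist_le_mul
      intro w₁ w₂
      rw [ContinuousMap.dist_le (by positivity)]
      intro s
      rw [dist_eq_norm]
      calc ‖((Kop f h hh ξ₀ T hT)^[n] w₁) s - ((Kop f h hh ξ₀ T hT)^[n] w₂) s‖
          ≤ L^n * (s:ℝ)^n / (n.factorial : ℝ) * dist w₁ w₂ :=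
            Kop_iter_bound f hh ξ₀ hT w₁ w₂ n s
        _ ≤ (K : ℝ) * dist w₁ w₂ := by
            apply mul_le_mul_of_nonneg_right _ dist_nonneg
            rw [hKcoe]
            have hmono : L^n * ((s:ℝ))^n ≤ (L*T)^n := by
              have h1 : L^n * ((s:ℝ))^n = (L * (s:ℝ))^n := (mul_pow _ _ _).symm
              rw [h1]
              exact pow_le_pow_left₀ (mul_nonneg hL0 s.2.1)
                (mul_le_mul_of_nonneg_left s.2.2 hL0) n
            exact div_le_div_of_nonneg_right hmono (Nat.cast_nonneg _)
  refine ⟨hcontr.fixedPoint _, ContractingWith.isFixedPt_fixedPoint_iterate hcontr, ?_⟩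
  intro w hw
  have h2 : Function.IsFixedPt ((Kop f h hh ξ₀ T hT)^[n]) w := (Function.IsFixedPt.iterate hw n)
  exact hcontr.fixedPoint_unique h2

lemma fixed_integral_eq (f : SchwartzMap (E d) ℂ) (hh : 0 < h) (ξ₀ : E d) {T : ℝ} (hT : 0 ≤ T)
    {w : C(Icc (0:ℝ) T, E d)} (hfix : Kop f h hh ξ₀ T hT w = w) :
    ∀ t ∈ Icc (0:ℝ) T,
      extIcc T hT w t = ξ₀ + ∫ τ in (0:ℝ)..t, calF2 f h (extIcc T hT w) τ := by
  intro t ht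
  rw [extIcc_eq T hT w ht]
  conv_lhs => rw [← hfix]
  rfl

lemma restrict_isFixedPt (f : SchwartzMap (E d) ℂ) (hh : 0 < h) (ξ₀ : E d) {u : ℝ → E d}
    (hu : Continuous u) {S : ℝ} (hS : 0 ≤ S)
    (heq : ∀ t ∈ Icc (0:ℝ) S, u t = ξ₀ + ∫ τ in (0:ℝ)..t, calF2 f h u τ) :
    Kop f h hh ξ₀ S hS ⟨fun s : Icc (0:ℝ) S => u s, hu.comp continuous_subtype_val⟩
      = ⟨fun s : Icc (0:ℝ) S => u s, hu.comp continuous_subtype_val⟩ := by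
  set w : C(Icc (0:ℝ) S, E d) := ⟨fun s : Icc (0:ℝ) S => u s, hu.comp continuous_subtype_val⟩
    with hw
  ext s
  rw [Kop_apply]
  have hs0 : (0:ℝ) ≤ (s:ℝ) := s.2.1
  have hkey : (∫ τ in (0:ℝ)..(s:ℝ), calF2 f h (extIcc S hS w) τ)
      = ∫ τ in (0:ℝ)..(s:ℝ), calF2 f h u τ := by
    apply intervalIntegral.integral_congr
    intro τ hτ
    rw [uIcc_of_le hs0] at hτ
    apply calF2_congr f hh hτ.1
    intro σ hσ
    have hσS : σ ∈ Icc (0:ℝ) S := ⟨hσ.1, hσ.2.trans (hτ.2.trans s.2.2)⟩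
    rw [extIcc_eq S hS w hσS]
    rfl
  rw [hkey, ← heq (s:ℝ) ⟨s.2.1, s.2.2⟩]
  rfl

theorem statement0 (d : ℕ) (hd : 1 ≤ d) (f : SchwartzMap (E d) ℂ) (h : ℝ) (hh : 0 < h)
    (ξ₀ : E d) (hξ₀ : ξ₀ ≠ 0) :
    ∃ ξ : ℝ → E d, IsSolutionH f h ξ₀ ξ ∧
      ∀ ζ : ℝ → E d, IsSolutionH f h ξ₀ ζ → Set.EqOn ζ ξ (Set.Ici (0 : ℝ)) := by
  have hcalF : ∀ (w : ℝ → E d) (t : ℝ), calF f h w t = calF2 f h w t :=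
    fun w t => calF_eq f hh w t
  have hTn : ∀ n : ℕ, (0:ℝ) ≤ (n:ℝ) + 1 := fun n => by positivity
  -- the family of fixed points on `[0, n+1]`
  have P : ∀ n : ℕ, ∃! w : C(Icc (0:ℝ) ((n:ℝ)+1), E d),
      Kop f h hh ξ₀ ((n:ℝ)+1) (hTn n) w = w := fun n => Kop_exists_unique f hh ξ₀ (hTn n)
  let W : ∀ n : ℕ, C(Icc (0:ℝ) ((n:ℝ)+1), E d) := fun n => (P n).choose
  have hWfix : ∀ n : ℕ, Kop f h hh ξ₀ ((n:ℝ)+1) (hTn n) (W n) = W n := fun n => (P n).choose_spec.1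
  have hWuniq : ∀ (n : ℕ) (w : C(Icc (0:ℝ) ((n:ℝ)+1), E d)),
      Kop f h hh ξ₀ ((n:ℝ)+1) (hTn n) w = w → w = W n := fun n => (P n).choose_spec.2
  let U : ℕ → ℝ → E d := fun n => extIcc ((n:ℝ)+1) (hTn n) (W n)
  have hUcont : ∀ n : ℕ, Continuous (U n) := fun n => continuous_extIcc _ _ _
  have hUeq : ∀ n : ℕ, ∀ t ∈ Icc (0:ℝ) ((n:ℝ)+1),
      U n t = ξ₀ + ∫ τ in (0:ℝ)..t, calF2 f h (U n) τ :=
    fun n => fixed_integral_eq f hh ξ₀ (hTn n) (hWfix n)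
  -- a general consistency principle: any continuous global function satisfying the
  -- integral equation on `[0, n+1]` agrees there with `U n`
  have hconsist : ∀ (u : ℝ → E d), Continuous u → ∀ n : ℕ,
      (∀ t ∈ Icc (0:ℝ) ((n:ℝ)+1), u t = ξ₀ + ∫ τ in (0:ℝ)..t, calF2 f h u τ) →
      ∀ t, t ∈ Icc (0:ℝ) ((n:ℝ)+1) → u t = U n t := by
    intro u hu n hueq t htn
    have hfix := restrict_isFixedPt f hh ξ₀ hu (hTn n) hueq
    have huW := hWuniq n _ hfix
    have happ := congrArg (fun w : C(Icc (0:ℝ) ((n:ℝ)+1), E d) => w ⟨t, htn⟩) huW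
    simp only [ContinuousMap.coe_mk] at happ
    rw [show U n t = W n ⟨t, htn⟩ from extIcc_eq _ (hTn n) (W n) htn, ← happ]
  -- pairwise consistency of the `U n`
  have hUU : ∀ m n : ℕ, ∀ t, t ∈ Icc (0:ℝ) ((m:ℝ)+1) → t ∈ Icc (0:ℝ) ((n:ℝ)+1) →
      U m t = U n t := by
    have key : ∀ m n : ℕ, (m:ℝ) ≤ (n:ℝ) → ∀ t, t ∈ Icc (0:ℝ) ((m:ℝ)+1) →
        U n t = U m t := by
      intro m n hmn t htm
      apply hconsist (U n) (hUcont n) m _ t htm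
      intro t' ht'
      exact hUeq n t' ⟨ht'.1, ht'.2.trans (by linarith)⟩
    intro m n t htm htn
    rcases le_total (m:ℝ) (n:ℝ) with hmn | hnm
    · exact (key m n hmn t htm).symm
    · exact key n m hnm t htn
  -- the global solution
  set ξ : ℝ → E d := fun t => U ⌊t⌋₊ t with hξdef
  have hξU : ∀ n : ℕ, ∀ t, 0 ≤ t → t ≤ (n:ℝ)+1 → ξ t = U n t := by
    intro n t ht htn
    exact hUU ⌊t⌋₊ n t ⟨ht, (Nat.lt_floor_add_one t).le⟩ ⟨ht, htn⟩
  have hξeq : ∀ t, 0 ≤ t → ξ t = ξ₀ + ∫ τ in (0:ℝ)..t, calF2 f h ξ τ := by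
    intro t ht
    have htn : t ≤ (⌊t⌋₊:ℝ)+1 := (Nat.lt_floor_add_one t).le
    have h1 : ξ t = U ⌊t⌋₊ t := rfl
    rw [h1, hUeq ⌊t⌋₊ t ⟨ht, htn⟩]
    refine congrArg (fun z => ξ₀ + z) ?_
    apply intervalIntegral.integral_congr
    intro τ hτ
    rw [uIcc_of_le ht] at hτ
    apply calF2_congr f hh hτ.1
    intro σ hσ
    exact (hξU ⌊t⌋₊ σ hσ.1 ((hσ.2.trans hτ.2).trans htn)).symm
  have hξ0 : ξ 0 = ξ₀ := by
    rw [hξeq 0 le_rfl, intervalIntegral.integral_same, add_zero]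
  -- key local identification of `ξ` with `U n` near a time `t₀`
  refine ⟨ξ, ⟨hξ0, ?_, ?_⟩, ?_⟩
  · -- derivative
    intro t ht
    rw [mem_Ici] at ht
    set n := ⌊t⌋₊ with hn
    have htlt : t < (n:ℝ)+1 := Nat.lt_floor_add_one t
    have hFcont : Continuous (calF2 f h (U n)) := continuous_calF2 f hh (hUcont n)
    set Pn : ℝ → E d := fun x => ξ₀ + ∫ τ in (0:ℝ)..x, calF2 f h (U n) τ with hPn
    have hderiv : HasDerivAt Pn (calF2 f h (U n) t) t := by
      have hd := intervalIntegral.integral_hasDerivAt_right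
        (hFcont.intervalIntegrable 0 t)
        (hFcont.aestronglyMeasurable.stronglyMeasurableAtFilter)
        hFcont.continuousAt
      exact hd.const_add ξ₀
    have hPeq : ∀ x ∈ Ico (0:ℝ) ((n:ℝ)+1), ξ x = Pn x := by
      intro x hx
      have e1 : Pn x = ξ₀ + ∫ τ in (0:ℝ)..x, calF2 f h (U n) τ := rfl
      rw [hξeq x hx.1, e1]
      refine congrArg (fun z => ξ₀ + z) ?_
      apply intervalIntegral.integral_congr
      intro τ hτ
      rw [uIcc_of_le hx.1] at hτ
      apply calF2_congr f hh hτ.1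
      intro σ hσ
      exact hξU n σ hσ.1 ((hσ.2.trans hτ.2).trans hx.2.le)
    have hmem : Ico (0:ℝ) ((n:ℝ)+1) ∈ 𝓝[Ici 0] t := by
      rw [← Ici_inter_Iio]
      exact inter_mem self_mem_nhdsWithin
        (mem_nhdsWithin_of_mem_nhds (isOpen_Iio.mem_nhds htlt))
    have hval : calF2 f h (U n) t = calF2 f h ξ t := by
      apply calF2_congr f hh ht
      intro σ hσ
      exact (hξU n σ hσ.1 (hσ.2.trans htlt.le)).symm
    rw [hcalF, ← hval]
    apply (hderiv.hasDerivWithinAt).congr_of_eventuallyEq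
      (eventuallyEq_of_mem hmem hPeq) (hPeq t ⟨ht, htlt⟩)
  · -- continuity of the vector field along the solution
    intro t ht
    rw [mem_Ici] at ht
    set n := ⌊t⌋₊ with hn
    have htlt : t < (n:ℝ)+1 := Nat.lt_floor_add_one t
    have hFcont : Continuous (calF2 f h (U n)) := continuous_calF2 f hh (hUcont n)
    have hmem : Ico (0:ℝ) ((n:ℝ)+1) ∈ 𝓝[Ici 0] t := by
      rw [← Ici_inter_Iio]
      exact inter_mem self_mem_nhdsWithin
        (mem_nhdsWithin_of_mem_nhds (isOpen_Iio.mem_nhds htlt))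
    have hFeq : ∀ x ∈ Ico (0:ℝ) ((n:ℝ)+1), calF f h ξ x = calF2 f h (U n) x := by
      intro x hx
      rw [hcalF]
      apply calF2_congr f hh hx.1
      intro σ hσ
      exact hξU n σ hσ.1 (hσ.2.trans hx.2.le)
    apply ContinuousWithinAt.congr_of_eventuallyEq
      (hFcont.continuousAt.continuousWithinAt)
      (eventuallyEq_of_mem hmem hFeq) (hFeq t ⟨ht, htlt⟩)
  · -- uniqueness
    intro ζ hζ
    obtain ⟨hζ0, hζd, hζc⟩ := hζ
    have hζcont : ContinuousOn ζ (Ici 0) := fun x hx => (hζd x hx).continuousWithinAt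
    set ζ' : ℝ → E d := fun s => ζ (max s 0) with hζ'def
    have hζ'cont : Continuous ζ' := by
      apply hζcont.comp_continuous (continuous_id.max continuous_const)
      intro x
      exact le_max_right x 0
    have hζ'eq : ∀ s : ℝ, 0 ≤ s → ζ' s = ζ s := by
      intro s hs
      simp only [hζ'def, max_eq_left hs]
    have hζint : ∀ t, 0 ≤ t → ζ t = ξ₀ + ∫ τ in (0:ℝ)..t, calF f h ζ τ := by
      intro t ht
      have hftc := intervalIntegral.integral_eq_sub_of_hasDeriv_right_of_le ht
        (hζcont.mono Icc_subset_Ici_self)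
        (fun x hx => ((hζd x (mem_Ici.mpr hx.1.le)).mono
          (fun y (hy : y ∈ Ioi x) => (hx.1.trans hy).le)))
        ((hζc.mono (by rw [uIcc_of_le ht]; exact Icc_subset_Ici_self)).intervalIntegrable)
      rw [hftc, hζ0]
      abel
    have hζ'int : ∀ n : ℕ, ∀ t ∈ Icc (0:ℝ) ((n:ℝ)+1),
        ζ' t = ξ₀ + ∫ τ in (0:ℝ)..t, calF2 f h ζ' τ := by
      intro n t ht
      rw [hζ'eq t ht.1, hζint t ht.1]
      refine congrArg (fun z => ξ₀ + z) ?_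
      apply intervalIntegral.integral_congr
      intro τ hτ
      rw [uIcc_of_le ht.1] at hτ
      rw [hcalF]
      apply calF2_congr f hh hτ.1
      intro σ hσ
      exact (hζ'eq σ hσ.1).symm
    intro t ht
    rw [mem_Ici] at ht
    set n := ⌊t⌋₊ with hn
    have htn : t ≤ (n:ℝ)+1 := (Nat.lt_floor_add_one t).le
    have h1 : ζ' t = U n t := hconsist ζ' hζ'cont n (hζ'int n) t ⟨ht, htn⟩
    calc ζ t = ζ' t := (hζ'eq t ht).symm
      _ = U n t := h1
      _ = ξ t := (hξU n t ht htn).symm
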